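/- For density matrices ρ, σ and a matrix A with 0 ≤ A ≤ Id, the root fidelity satisfies √F(ρ,σ) ≤ √tr(σA†A)·√F(ρ, σ|A) + √tr(σ(Id−A))·√tr(ρ(Id−A)), where σ|A = AσA†/tr(σA†A). -/

import Mathlib

open Matrix ComplexOrder

/-- The positive semidefinite square root of a positive semidefinite matrix
(the definition Mathlib had as `Matrix.PosSemidef.sqrt`, since removed). -/
noncomputable def Matrix.PosSemidef.sqrt {n 𝕜 : Type*} [Fintype n] [DecidableEq n] [RCLike 𝕜]
    {A : Matrix n n 𝕜} (hA : A.PosSemidef) : Matrix n n 𝕜 :=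
  hA.1.eigenvectorUnitary.1 * diagonal ((↑) ∘ Real.sqrt ∘ hA.1.eigenvalues) *
  (star hA.1.eigenvectorUnitary : Matrix n n 𝕜)

/-- The Schatten 1-norm (trace norm): ‖M‖₁ = tr √(MᴴM). -/
noncomputable def traceNorm {n m : Type*} [Fintype n] [Fintype m] [DecidableEq m]
    (M : Matrix n m ℂ) : ℝ :=
  ((Matrix.posSemidef_conjTranspose_mul_self M).sqrt.trace).re

namespace Matrix.PosSemidef
open scoped MatrixOrder
variable {n : Type*} [Fintype n] [DecidableEq n] {A : Matrix n n ℂ}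

lemma sqrt_eq_cfcSqrt (hA : A.PosSemidef) : hA.sqrt = CFC.sqrt A := by
  rw [CFC.sqrt_eq_cfc, cfc_nnreal_eq_real _ A, hA.1.cfc_eq, IsHermitian.cfc,
    Unitary.conjStarAlgAut_apply, Matrix.PosSemidef.sqrt]
  congr 3
  funext i
  simp [hA.eigenvalues_nonneg i]

lemma sqrt_mul_self (hA : A.PosSemidef) : hA.sqrt * hA.sqrt = A := by
  rw [sqrt_eq_cfcSqrt]
  exact CFC.sqrt_mul_sqrt_self A hA.nonneg

lemma posSemidef_sqrt (hA : A.PosSemidef) : hA.sqrt.PosSemidef := by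
  rw [sqrt_eq_cfcSqrt]
  exact (CFC.sqrt_nonneg A).posSemidef

lemma eq_sqrt_of_sq_eq {B : Matrix n n ℂ} (hB : B.PosSemidef) (hA : A.PosSemidef) (h : B ^ 2 = A) :
    B = hA.sqrt := by
  rw [sqrt_eq_cfcSqrt]
  exact (CFC.sqrt_unique (by rw [← sq, h]) hB.nonneg).symm

end Matrix.PosSemidef

namespace TNaux

set_option linter.unusedSectionVars false
set_option maxHeartbeats 1600000

variable {n : Type*} [Fintype n] [DecidableEq n]

noncomputable def q {n : Type*} [Fintype n] (x : n → ℂ) : ℝ := (dotProduct (star x) x).re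

lemma q_nonneg {n : Type*} [Fintype n] (x : n → ℂ) : 0 ≤ q x :=
  (Complex.nonneg_iff.mp (dotProduct_star_self_nonneg x)).1

lemma dot_self_eq_q {n : Type*} [Fintype n] (x : n → ℂ) :
    dotProduct (star x) x = (q x : ℂ) := by
  obtain ⟨h1, h2⟩ := Complex.nonneg_iff.mp (dotProduct_star_self_nonneg x)
  exact Complex.ext rfl h2.symm

lemma dot_cs {n : Type*} [Fintype n] (x y : n → ℂ) :
    ‖dotProduct (star x) y‖ ≤ Real.sqrt (q x) * Real.sqrt (q y) := by
  rw [dotProduct_comm, ← EuclideanSpace.inner_toLp_toLp (𝕜 := ℂ)]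
  calc ‖(inner ℂ (WithLp.toLp 2 x) (WithLp.toLp 2 y) : ℂ)‖
      ≤ ‖WithLp.toLp 2 x‖ * ‖WithLp.toLp 2 y‖ := norm_inner_le_norm _ _
    _ = Real.sqrt (q x) * Real.sqrt (q y) := by
        rw [@norm_eq_sqrt_re_inner ℂ, @norm_eq_sqrt_re_inner ℂ,
          EuclideanSpace.inner_toLp_toLp, EuclideanSpace.inner_toLp_toLp, q, q,
          dotProduct_comm x, dotProduct_comm y]
        rfl

def Ctr {n : Type*} [Fintype n] [DecidableEq n] (K : Matrix n n ℂ) : Prop :=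
  (1 - Kᴴ * K).PosSemidef

lemma quad_eq (K : Matrix n n ℂ) (v : n → ℂ) :
    dotProduct (star v) ((Kᴴ * K) *ᵥ v)
      = dotProduct (star (K *ᵥ v)) (K *ᵥ v) := by
  rw [star_mulVec, ← dotProduct_mulVec, mulVec_mulVec]

lemma ctr_q {K : Matrix n n ℂ} (hK : Ctr K) (v : n → ℂ) : q (K *ᵥ v) ≤ q v := by
  have h := PosSemidef.dotProduct_mulVec_nonneg hK v
  rw [sub_mulVec, dotProduct_sub, one_mulVec, quad_eq] at h
  have := (Complex.nonneg_iff.mp h).1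
  simp only [Complex.sub_re] at this
  unfold q
  linarith

lemma ctr_sqrt_q {K : Matrix n n ℂ} (hK : Ctr K) (v : n → ℂ) :
    Real.sqrt (q (K *ᵥ v)) ≤ Real.sqrt (q v) :=
  Real.sqrt_le_sqrt (ctr_q hK v)

lemma ctr_star {K : Matrix n n ℂ} (hK : Ctr K) : Ctr Kᴴ := by
  have key : ∀ v, q (Kᴴ *ᵥ v) ≤ q v := by
    intro v
    have h1 : dotProduct (star (Kᴴ *ᵥ v)) (Kᴴ *ᵥ v)
        = dotProduct (star (K *ᵥ (Kᴴ *ᵥ v))) v := by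
      conv_lhs => rw [dotProduct_mulVec, ← star_mulVec]
    have h2 : q (Kᴴ *ᵥ v) ≤ Real.sqrt (q (K *ᵥ (Kᴴ *ᵥ v))) * Real.sqrt (q v) := by
      calc q (Kᴴ *ᵥ v) ≤ ‖dotProduct (star (Kᴴ *ᵥ v)) (Kᴴ *ᵥ v)‖ :=
            Complex.re_le_norm _
        _ = ‖dotProduct (star (K *ᵥ (Kᴴ *ᵥ v))) v‖ := by rw [h1]
        _ ≤ Real.sqrt (q (K *ᵥ (Kᴴ *ᵥ v))) * Real.sqrt (q v) := dot_cs _ _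
    have h3 : q (Kᴴ *ᵥ v) ≤ Real.sqrt (q (Kᴴ *ᵥ v)) * Real.sqrt (q v) :=
      h2.trans (mul_le_mul_of_nonneg_right (ctr_sqrt_q hK _) (Real.sqrt_nonneg _))
    nlinarith [mul_self_nonneg (Real.sqrt (q v) - Real.sqrt (q (Kᴴ *ᵥ v))),
      Real.mul_self_sqrt (q_nonneg (Kᴴ *ᵥ v)), Real.mul_self_sqrt (q_nonneg v)]
  refine PosSemidef.of_dotProduct_mulVec_nonneg ?_ ?_
  · show (1 - Kᴴᴴ * Kᴴ)ᴴ = _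
    simp [Matrix.conjTranspose_sub, Matrix.conjTranspose_mul]
  · intro v
    rw [sub_mulVec, dotProduct_sub, one_mulVec, quad_eq Kᴴ v,
      dot_self_eq_q, dot_self_eq_q, Complex.nonneg_iff]
    constructor
    · simp only [Complex.sub_re, Complex.ofReal_re]
      linarith [key v]
    · simp

section Dgm
variable (V : Matrix n n ℂ)

noncomputable def Dgm (g : n → ℝ) : Matrix n n ℂ := V * diagonal (fun i => (g i : ℂ)) * Vᴴ

variable {V}
variable (hV1 : Vᴴ * V = 1) (hV2 : V * Vᴴ = 1)

include hV1 in
lemma Dgm_mul (g h : n → ℝ) : Dgm V g * Dgm V h = Dgm V (g * h) := by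
  unfold Dgm
  rw [show V * diagonal (fun i => (g i : ℂ)) * Vᴴ * (V * diagonal (fun i => (h i : ℂ)) * Vᴴ)
    = V * (diagonal (fun i => (g i : ℂ)) * (Vᴴ * V) * diagonal (fun i => (h i : ℂ))) * Vᴴ by
      noncomm_ring]
  rw [hV1, mul_one, diagonal_mul_diagonal]
  norm_num

lemma Dgm_conjTranspose (g : n → ℝ) : (Dgm V g)ᴴ = Dgm V g := by
  unfold Dgm
  rw [conjTranspose_mul, conjTranspose_mul, conjTranspose_conjTranspose, diagonal_conjTranspose]
  rw [mul_assoc]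
  congr 2
  ext i j
  simp [Matrix.diagonal]

lemma Dgm_psd {g : n → ℝ} (hg : ∀ i, 0 ≤ g i) : (Dgm V g).PosSemidef := by
  have h1 : (diagonal (fun i => (g i : ℂ))).PosSemidef := by
    refine PosSemidef.diagonal fun i => ?_
    simp only [Pi.zero_apply]
    rw [Complex.nonneg_iff]
    simp [hg i]
  simpa [Dgm] using h1.mul_mul_conjTranspose_same V

include hV1 in
lemma Dgm_trace (g : n → ℝ) : (Dgm V g).trace = ((∑ i, g i : ℝ) : ℂ) := by
  unfold Dgm
  rw [trace_mul_cycle, hV1, one_mul, trace_diagonal]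
  push_cast
  rfl

include hV2 in
lemma Dgm_one : Dgm V 1 = 1 := by
  unfold Dgm
  simp [hV2]

lemma Dgm_sub (g h : n → ℝ) : Dgm V g - Dgm V h = Dgm V (g - h) := by
  unfold Dgm
  rw [← Matrix.sub_mul, ← Matrix.mul_sub]
  congr 2
  rw [diagonal_sub]
  funext i j
  simp [Matrix.diagonal, Pi.sub_apply]

lemma Dgm_zero : Dgm V 0 = 0 := by
  unfold Dgm
  norm_num

end Dgm

section spec
variable {H : Matrix n n ℂ}

noncomputable def Vm (hH : H.IsHermitian) : Matrix n n ℂ := hH.eigenvectorUnitary.1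

lemma Vm_star_mul (hH : H.IsHermitian) : (Vm hH)ᴴ * Vm hH = 1 := by
  rw [← Matrix.star_eq_conjTranspose]
  exact_mod_cast Unitary.coe_star_mul_self hH.eigenvectorUnitary

lemma Vm_mul_star (hH : H.IsHermitian) : Vm hH * (Vm hH)ᴴ = 1 := by
  rw [← Matrix.star_eq_conjTranspose]
  exact_mod_cast Unitary.coe_mul_star_self hH.eigenvectorUnitary

lemma Dgm_spec (hH : H.IsHermitian) : H = Dgm (Vm hH) hH.eigenvalues := by
  conv_lhs => rw [hH.spectral_theorem]
  rfl

lemma Dgm_sqrt (hP : H.PosSemidef) (hH : H.IsHermitian) :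
    hP.sqrt = Dgm (Vm hH) (Real.sqrt ∘ hH.eigenvalues) := by
  rw [Matrix.PosSemidef.sqrt]
  rfl
end spec

section polar
variable (M : Matrix n n ℂ)

noncomputable def hM : (Mᴴ * M).IsHermitian := (posSemidef_conjTranspose_mul_self M).1
noncomputable def pd : n → ℝ := (hM M).eigenvalues
noncomputable def pg : n → ℝ := fun i => if pd M i = 0 then 0 else (Real.sqrt (pd M i))⁻¹
noncomputable def pe : n → ℝ := fun i => if pd M i = 0 then 0 else 1
noncomputable def pV : Matrix n n ℂ := Vm (hM M)

lemma pV1 : (pV M)ᴴ * pV M = 1 := Vm_star_mul _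
lemma pV2 : pV M * (pV M)ᴴ = 1 := Vm_mul_star _

lemma pd_nonneg (i : n) : 0 ≤ pd M i :=
  (posSemidef_conjTranspose_mul_self M).eigenvalues_nonneg i

lemma sqrt_pd_pos {i : n} (h : pd M i ≠ 0) : 0 < Real.sqrt (pd M i) :=
  Real.sqrt_pos.mpr (lt_of_le_of_ne (pd_nonneg M i) (Ne.symm h))

lemma pe_eq : pg M * (Real.sqrt ∘ pd M) = pe M := by
  funext i
  simp only [Pi.mul_apply, pg, pe, Function.comp_apply]
  by_cases h : pd M i = 0
  · simp [h]
  · have hs : Real.sqrt (pd M i) ≠ 0 := (sqrt_pd_pos M h).ne'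
    simp [h, inv_mul_cancel₀ hs]

lemma gdg_eq : pg M * (pd M * pg M) = pe M := by
  funext i
  simp only [Pi.mul_apply, pg, pe]
  by_cases h : pd M i = 0
  · simp [h]
  · have h2 : Real.sqrt (pd M i) * Real.sqrt (pd M i) = pd M i :=
      Real.mul_self_sqrt (pd_nonneg M i)
    have hs : Real.sqrt (pd M i) ≠ 0 := (sqrt_pd_pos M h).ne'
    simp only [if_neg h]
    rw [← h2]
    field_simp
    rw [Real.sqrt_sq (Real.sqrt_nonneg _)]

lemma gd_eq : pg M * pd M = Real.sqrt ∘ pd M := by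
  funext i
  simp only [Pi.mul_apply, pg, Function.comp_apply]
  by_cases h : pd M i = 0
  · simp [h]
  · have h2 : Real.sqrt (pd M i) * Real.sqrt (pd M i) = pd M i :=
      Real.mul_self_sqrt (pd_nonneg M i)
    have hs : Real.sqrt (pd M i) ≠ 0 := (sqrt_pd_pos M h).ne'
    rw [if_neg h, eq_comm, eq_inv_mul_iff_mul_eq₀ hs, h2]

lemma spec_eq : Mᴴ * M = Dgm (pV M) (pd M) := Dgm_spec (hM M)

lemma traceNorm_eq : traceNorm M = ∑ i, Real.sqrt (pd M i) := by
  unfold traceNorm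
  rw [Dgm_sqrt _ (hM M), Dgm_trace (Vm_star_mul _)]
  simp [pd]

lemma proj_eq : M * Dgm (pV M) (pe M) = M := by
  have h0 : (M * Dgm (pV M) (1 - pe M))ᴴ * (M * Dgm (pV M) (1 - pe M)) = 0 := by
    calc (M * Dgm (pV M) (1 - pe M))ᴴ * (M * Dgm (pV M) (1 - pe M))
        = Dgm (pV M) (1 - pe M) * (Mᴴ * M) * Dgm (pV M) (1 - pe M) := by
          rw [conjTranspose_mul, Dgm_conjTranspose]
          noncomm_ring
      _ = Dgm (pV M) ((1 - pe M) * pd M * (1 - pe M)) := by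
          rw [spec_eq, Dgm_mul (pV1 M), Dgm_mul (pV1 M)]
      _ = 0 := by
          rw [show ((1 : n → ℝ) - pe M) * pd M * (1 - pe M) = 0 by
            funext i
            simp only [Pi.mul_apply, Pi.sub_apply, Pi.one_apply, Pi.zero_apply, pe]
            by_cases h : pd M i = 0 <;> simp [h]]
          exact Dgm_zero
  have h2 : M * Dgm (pV M) (1 - pe M) = 0 := conjTranspose_mul_self_eq_zero.mp h0
  rw [← Dgm_sub, Dgm_one (pV2 M), Matrix.mul_sub, mul_one, sub_eq_zero] at h2
  exact h2.symm

lemma ctr_MPg : Ctr (M * Dgm (pV M) (pg M)) := by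
  unfold Ctr
  have h1 : (M * Dgm (pV M) (pg M))ᴴ * (M * Dgm (pV M) (pg M))
      = Dgm (pV M) (pg M * (pd M * pg M)) := by
    calc (M * Dgm (pV M) (pg M))ᴴ * (M * Dgm (pV M) (pg M))
        = Dgm (pV M) (pg M) * (Mᴴ * M) * Dgm (pV M) (pg M) := by
          rw [conjTranspose_mul, Dgm_conjTranspose]
          noncomm_ring
      _ = Dgm (pV M) (pg M * (pd M * pg M)) := by
          rw [spec_eq, Dgm_mul (pV1 M), ← mul_assoc, Dgm_mul (pV1 M)]
  rw [h1, gdg_eq, ← Dgm_one (pV2 M), Dgm_sub]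
  refine Dgm_psd fun i => ?_
  simp only [Pi.sub_apply, Pi.one_apply, pe]
  by_cases h : pd M i = 0 <;> simp [h]

lemma col_dot_one (i : n) :
    dotProduct (star (fun j => pV M j i)) (fun j => pV M j i) = 1 := by
  have h := congrFun (congrFun (pV1 M) i) i
  simp only [Matrix.mul_apply, Matrix.one_apply_eq, Matrix.conjTranspose_apply] at h
  simpa [dotProduct, Pi.star_apply] using h

lemma entry_vec (X : Matrix n n ℂ) (i : n) :
    ((pV M)ᴴ * X * pV M) i i
      = dotProduct (star (fun j => pV M j i)) (X *ᵥ fun j => pV M j i) := by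
  simp only [Matrix.mul_apply, Matrix.conjTranspose_apply, Matrix.mulVec, dotProduct,
    Pi.star_apply, Finset.sum_mul, Finset.mul_sum]
  rw [Finset.sum_comm]
  apply Finset.sum_congr rfl
  intro j _
  apply Finset.sum_congr rfl
  intro k _
  ring

lemma trace_mul_diag (C : Matrix n n ℂ) (f : n → ℝ) :
    (C * diagonal (fun i => (f i : ℂ))).trace = ∑ i, C i i * (f i : ℂ) := by
  simp [Matrix.trace, Matrix.diag, Matrix.mul_diagonal]

lemma ctr_trace_le {K : Matrix n n ℂ} (hK : Ctr K) :
    ((K * M).trace).re ≤ traceNorm M := by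
  set W := M * Dgm (pV M) (pg M) with hW
  have hM2 : M = W * Dgm (pV M) (Real.sqrt ∘ pd M) := by
    rw [hW, mul_assoc, Dgm_mul (pV1 M), pe_eq, proj_eq]
  have hKM : K * M = (K * W * pV M *
      diagonal (fun i => ((Real.sqrt ∘ pd M) i : ℂ))) * (pV M)ᴴ := by
    conv_lhs => rw [hM2]
    unfold Dgm
    noncomm_ring
  have htr : (K * M).trace = ((pV M)ᴴ * (K * W) * pV M *
      diagonal (fun i => ((Real.sqrt ∘ pd M) i : ℂ))).trace := by
    rw [hKM, trace_mul_comm]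
    congr 1
    noncomm_ring
  have hdiag : ((pV M)ᴴ * (K * W) * pV M *
      diagonal (fun i => ((Real.sqrt ∘ pd M) i : ℂ))).trace
      = ∑ i, ((pV M)ᴴ * (K * W) * pV M) i i * ((Real.sqrt (pd M i) : ℝ) : ℂ) :=
    trace_mul_diag _ _
  rw [htr, hdiag, traceNorm_eq, Complex.re_sum]
  apply Finset.sum_le_sum
  intro i _
  have hCi : ‖((pV M)ᴴ * (K * W) * pV M) i i‖ ≤ 1 := by
    rw [entry_vec]
    have hq1 : q (fun j => pV M j i) = 1 := by
      unfold q
      rw [col_dot_one]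
      simp
    have hq2 : q ((K * W) *ᵥ fun j => pV M j i) ≤ 1 := by
      rw [← mulVec_mulVec]
      calc q (K *ᵥ (W *ᵥ fun j => pV M j i))
          ≤ q (W *ᵥ fun j => pV M j i) := ctr_q hK _
        _ ≤ q (fun j => pV M j i) := ctr_q (ctr_MPg M) _
        _ = 1 := hq1
    calc ‖dotProduct (star fun j => pV M j i) ((K * W) *ᵥ fun j => pV M j i)‖
        ≤ Real.sqrt (q (fun j => pV M j i)) *
            Real.sqrt (q ((K * W) *ᵥ fun j => pV M j i)) := dot_cs _ _
      _ ≤ 1 := by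
          rw [hq1, Real.sqrt_one, one_mul]
          exact Real.sqrt_le_one.mpr hq2
  have hre : (((pV M)ᴴ * (K * W) * pV M) i i * ((Real.sqrt (pd M i) : ℝ) : ℂ)).re
      = (((pV M)ᴴ * (K * W) * pV M) i i).re * Real.sqrt (pd M i) := by
    simp [Complex.mul_re]
  rw [hre]
  calc (((pV M)ᴴ * (K * W) * pV M) i i).re * Real.sqrt (pd M i)
      ≤ 1 * Real.sqrt (pd M i) := by
        refine mul_le_mul_of_nonneg_right ?_ (Real.sqrt_nonneg _)
        exact (Complex.re_le_norm _).trans hCi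
    _ = Real.sqrt (pd M i) := one_mul _

lemma exists_ctr : ∃ K : Matrix n n ℂ, Ctr K ∧ ((K * M).trace).re = traceNorm M := by
  refine ⟨Dgm (pV M) (pg M) * Mᴴ, ?_, ?_⟩
  · have h1 : Ctr ((Dgm (pV M) (pg M) * Mᴴ)ᴴ) := by
      rw [conjTranspose_mul, conjTranspose_conjTranspose, Dgm_conjTranspose]
      exact ctr_MPg M
    have h2 := ctr_star h1
    rwa [conjTranspose_conjTranspose] at h2
  · have h3 : Dgm (pV M) (pg M) * Mᴴ * M = Dgm (pV M) (pg M * pd M) := by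
      rw [mul_assoc, spec_eq, Dgm_mul (pV1 M)]
    rw [h3, gd_eq, Dgm_trace (pV1 M), traceNorm_eq]
    simp

end polar

section derived
variable {n : Type*} [Fintype n] [DecidableEq n]

lemma traceNorm_nonneg (M : Matrix n n ℂ) : 0 ≤ traceNorm M := by
  rw [traceNorm_eq]
  exact Finset.sum_nonneg fun i _ => Real.sqrt_nonneg _

lemma traceNorm_conjTranspose_le (M : Matrix n n ℂ) : traceNorm Mᴴ ≤ traceNorm M := by
  obtain ⟨K, hK, heq⟩ := exists_ctr Mᴴ
  have h1 : (Kᴴ * M).trace = star ((K * Mᴴ).trace) := by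
    rw [← Matrix.trace_conjTranspose, conjTranspose_mul, conjTranspose_conjTranspose,
      trace_mul_comm]
  have h2 : ((K * Mᴴ).trace).re = ((Kᴴ * M).trace).re := by
    rw [h1]
    simp
  rw [← heq, h2]
  exact ctr_trace_le M (ctr_star hK)

lemma traceNorm_conjTranspose (M : Matrix n n ℂ) : traceNorm Mᴴ = traceNorm M := by
  refine le_antisymm (traceNorm_conjTranspose_le M) ?_
  have := traceNorm_conjTranspose_le Mᴴ
  rwa [conjTranspose_conjTranspose] at this

lemma traceNorm_triangle (X Y : Matrix n n ℂ) :
    traceNorm (X + Y) ≤ traceNorm X + traceNorm Y := by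
  obtain ⟨K, hK, heq⟩ := exists_ctr (X + Y)
  rw [← heq, Matrix.mul_add, trace_add, Complex.add_re]
  exact add_le_add (ctr_trace_le X hK) (ctr_trace_le Y hK)

lemma psd_smul {S : Matrix n n ℂ} (hS : S.PosSemidef) {c : ℝ} (hc : 0 ≤ c) :
    ((c : ℂ) • S).PosSemidef := by
  refine PosSemidef.of_dotProduct_mulVec_nonneg ?_ ?_
  · show ((c : ℂ) • S)ᴴ = _
    rw [conjTranspose_smul, hS.1]
    congr 1
    simp
  · intro x
    rw [smul_mulVec, dotProduct_smul, smul_eq_mul]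
    have h := hS.dotProduct_mulVec_nonneg x
    have hc' : 0 ≤ ((c : ℝ) : ℂ) := by
      rw [Complex.nonneg_iff]
      simp [hc]
    exact mul_nonneg hc' h

lemma traceNorm_eq_of_sq {X Y : Matrix n n ℂ} {c : ℝ} (hc : 0 ≤ c)
    (h : Xᴴ * X = ((c : ℂ) ^ 2) • (Yᴴ * Y)) : traceNorm X = c * traceNorm Y := by
  have hY := posSemidef_conjTranspose_mul_self Y
  have hs : ((c : ℂ) • hY.sqrt) ^ 2 = Xᴴ * X := by
    rw [pow_two, smul_mul_smul_comm, hY.sqrt_mul_self, h, pow_two]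
  have hpsd : ((c : ℂ) • hY.sqrt).PosSemidef := psd_smul hY.posSemidef_sqrt hc
  have heq := hpsd.eq_sqrt_of_sq_eq (posSemidef_conjTranspose_mul_self X) hs
  unfold traceNorm
  rw [← heq, trace_smul, smul_eq_mul]
  simp [Complex.mul_re]

lemma trace_conj_mul_eq_dot (X Y : Matrix n n ℂ) :
    (Xᴴ * Y).trace
      = dotProduct (star (fun p : n × n => X p.1 p.2)) (fun p : n × n => Y p.1 p.2) := by
  simp only [Matrix.trace, Matrix.diag, mul_apply, conjTranspose_apply, dotProduct,
    Pi.star_apply, Fintype.sum_prod_type]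
  rw [Finset.sum_comm]

lemma q_mat (X : Matrix n n ℂ) : q (fun p : n × n => X p.1 p.2) = ((Xᴴ * X).trace).re := by
  unfold q
  rw [trace_conj_mul_eq_dot]

lemma CSmat (X Y : Matrix n n ℂ) :
    ‖(Xᴴ * Y).trace‖ ≤ Real.sqrt (((Xᴴ * X).trace).re) * Real.sqrt (((Yᴴ * Y).trace).re) := by
  rw [trace_conj_mul_eq_dot, ← q_mat, ← q_mat]
  exact dot_cs _ _

lemma psd_trace_nonneg {S : Matrix n n ℂ} (hS : S.PosSemidef) : 0 ≤ S.trace := by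
  have h1 : S = (hS.sqrt)ᴴ * hS.sqrt := by
    rw [hS.posSemidef_sqrt.1, hS.sqrt_mul_self]
  rw [h1, trace_conj_mul_eq_dot]
  exact dotProduct_star_self_nonneg _

lemma psd_trace_mul_nonneg {S T : Matrix n n ℂ} (hS : S.PosSemidef) (hT : T.PosSemidef) :
    0 ≤ (S * T).trace := by
  have hB : hT.sqrt * hT.sqrt = T := hT.sqrt_mul_self
  have hBh : (hT.sqrt)ᴴ = hT.sqrt := hT.posSemidef_sqrt.1
  have h1 : ((hT.sqrt)ᴴ * S * hT.sqrt).trace = (S * T).trace := by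
    rw [trace_mul_cycle, hBh, hB, trace_mul_comm]
  rw [← h1]
  exact psd_trace_nonneg (hS.conjTranspose_mul_mul_same hT.sqrt)

end derived
end TNaux

open TNaux

/-- Key lemma: √F(ρ,σ) ≤ √tr(σAᴴA)·√F(ρ,σ|A) + √tr(σ(1−A))·√tr(ρ(1−A)). -/
theorem rootFidelity_decomposition {d : ℕ} (ρ σ A : Matrix (Fin d) (Fin d) ℂ)
    (hρ : ρ.PosSemidef) (hρ1 : ρ.trace = 1)
    (hσ : σ.PosSemidef) (hσ1 : σ.trace = 1)
    (hA : A.PosSemidef) (hA1 : (1 - A).PosSemidef)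
    (hpos : 0 < ((σ * (Aᴴ * A)).trace).re)
    (hcond : (((σ * (Aᴴ * A)).trace)⁻¹ • (A * σ * Aᴴ)).PosSemidef) :
    traceNorm (hρ.sqrt * hσ.sqrt) ≤
      Real.sqrt (((σ * (Aᴴ * A)).trace).re) * traceNorm (hρ.sqrt * hcond.sqrt) +
        Real.sqrt (((σ * (1 - A)).trace).re) * Real.sqrt (((ρ * (1 - A)).trace).re) := by
  classical
  have hAH : Aᴴ = A := hA.1
  have hρh : (hρ.sqrt)ᴴ = hρ.sqrt := hρ.posSemidef_sqrt.1
  have hσh : (hσ.sqrt)ᴴ = hσ.sqrt := hσ.posSemidef_sqrt.1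
  have hAσA : (A * σ * Aᴴ).PosSemidef := hσ.mul_mul_conjTranspose_same A
  have htcyc : (σ * (Aᴴ * A)).trace = (A * σ * Aᴴ).trace := by
    rw [← mul_assoc, trace_mul_comm, ← mul_assoc]
  have ht0 : 0 ≤ (A * σ * Aᴴ).trace := psd_trace_nonneg hAσA
  have htim : ((σ * (Aᴴ * A)).trace).im = 0 := by
    rw [htcyc]
    exact ((Complex.nonneg_iff.mp ht0).2).symm
  have htre : (σ * (Aᴴ * A)).trace = ((((σ * (Aᴴ * A)).trace).re : ℝ) : ℂ) :=
    Complex.ext rfl (by simp [htim])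
  have htne : (σ * (Aᴴ * A)).trace ≠ 0 := by
    rw [htre]
    exact_mod_cast hpos.ne'
  have hAσA2 : A * σ * A
      = ((σ * (Aᴴ * A)).trace) • (((σ * (Aᴴ * A)).trace)⁻¹ • (A * σ * Aᴴ)) := by
    rw [smul_smul, mul_inv_cancel₀ htne, one_smul, hAH]
  obtain ⟨K, hK, hKeq⟩ := exists_ctr (hρ.sqrt * hσ.sqrt)
  rw [← hKeq]
  have hsplit : K * (hρ.sqrt * hσ.sqrt)
      = K * (hρ.sqrt * A * hσ.sqrt) + K * (hρ.sqrt * (1 - A) * hσ.sqrt) := by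
    rw [← Matrix.mul_add]
    congr 1
    noncomm_ring
  rw [hsplit, trace_add, Complex.add_re]
  have hterm1 : ((K * (hρ.sqrt * A * hσ.sqrt)).trace).re
      ≤ Real.sqrt (((σ * (Aᴴ * A)).trace).re) * traceNorm (hρ.sqrt * hcond.sqrt) := by
    have h1 := ctr_trace_le (hρ.sqrt * A * hσ.sqrt) hK
    have h2 : traceNorm (hρ.sqrt * A * hσ.sqrt)
        = Real.sqrt (((σ * (Aᴴ * A)).trace).re) * traceNorm (hρ.sqrt * hcond.sqrt) := by
      rw [← traceNorm_conjTranspose (hρ.sqrt * A * hσ.sqrt),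
          ← traceNorm_conjTranspose (hρ.sqrt * hcond.sqrt)]
      refine traceNorm_eq_of_sq (Real.sqrt_nonneg _) ?_
      have hτh : (hcond.sqrt)ᴴ = hcond.sqrt := hcond.posSemidef_sqrt.1
      have hc2 : ((Real.sqrt (((σ * (Aᴴ * A)).trace).re) : ℂ)) ^ 2
          = (σ * (Aᴴ * A)).trace := by
        rw [htre]
        norm_cast
        exact Real.sq_sqrt hpos.le
      rw [conjTranspose_conjTranspose, conjTranspose_conjTranspose, hc2]
      have hLeft : hρ.sqrt * A * hσ.sqrt * (hρ.sqrt * A * hσ.sqrt)ᴴ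
          = ((σ * (Aᴴ * A)).trace) •
            (hρ.sqrt * (((σ * (Aᴴ * A)).trace)⁻¹ • (A * σ * Aᴴ)) * hρ.sqrt) := by
        calc hρ.sqrt * A * hσ.sqrt * (hρ.sqrt * A * hσ.sqrt)ᴴ
            = hρ.sqrt * (A * (hσ.sqrt * hσ.sqrt) * A) * hρ.sqrt := by
              rw [conjTranspose_mul, conjTranspose_mul, hρh, hσh, hAH]
              noncomm_ring
          _ = hρ.sqrt * (A * σ * A) * hρ.sqrt := by rw [hσ.sqrt_mul_self]
          _ = hρ.sqrt * (((σ * (Aᴴ * A)).trace) •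
                (((σ * (Aᴴ * A)).trace)⁻¹ • (A * σ * Aᴴ))) * hρ.sqrt := by rw [← hAσA2]
          _ = ((σ * (Aᴴ * A)).trace) •
              (hρ.sqrt * (((σ * (Aᴴ * A)).trace)⁻¹ • (A * σ * Aᴴ)) * hρ.sqrt) := by
              rw [mul_smul_comm, smul_mul_assoc]
      have hRight : hρ.sqrt * hcond.sqrt * (hρ.sqrt * hcond.sqrt)ᴴ
          = hρ.sqrt * (((σ * (Aᴴ * A)).trace)⁻¹ • (A * σ * Aᴴ)) * hρ.sqrt := by
        have h10 : hρ.sqrt * hcond.sqrt * (hρ.sqrt * hcond.sqrt)ᴴ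
            = hρ.sqrt * (hcond.sqrt * hcond.sqrt) * hρ.sqrt := by
          rw [conjTranspose_mul, hρh, hτh]
          noncomm_ring
        rw [h10, hcond.sqrt_mul_self]
      rw [hLeft, hRight]
    rw [h2] at h1
    exact h1
  have hterm2 : ((K * (hρ.sqrt * (1 - A) * hσ.sqrt)).trace).re
      ≤ Real.sqrt (((σ * (1 - A)).trace).re) * Real.sqrt (((ρ * (1 - A)).trace).re) := by
    have hBB : hA1.sqrt * hA1.sqrt = 1 - A := hA1.sqrt_mul_self
    have hBh : (hA1.sqrt)ᴴ = hA1.sqrt := hA1.posSemidef_sqrt.1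
    have hXY : K * (hρ.sqrt * (1 - A) * hσ.sqrt)
        = (hA1.sqrt * hρ.sqrt * Kᴴ)ᴴ * (hA1.sqrt * hσ.sqrt) := by
      refine Eq.symm ?_
      calc (hA1.sqrt * hρ.sqrt * Kᴴ)ᴴ * (hA1.sqrt * hσ.sqrt)
          = K * (hρ.sqrt * (hA1.sqrt * hA1.sqrt) * hσ.sqrt) := by
            rw [conjTranspose_mul, conjTranspose_mul, conjTranspose_conjTranspose, hBh, hρh]
            noncomm_ring
        _ = K * (hρ.sqrt * (1 - A) * hσ.sqrt) := by rw [hBB]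
    have hYY : (((hA1.sqrt * hσ.sqrt)ᴴ * (hA1.sqrt * hσ.sqrt)).trace)
        = (σ * (1 - A)).trace := by
      have h5 : (hA1.sqrt * hσ.sqrt)ᴴ * (hA1.sqrt * hσ.sqrt)
          = hσ.sqrt * (1 - A) * hσ.sqrt := by
        calc (hA1.sqrt * hσ.sqrt)ᴴ * (hA1.sqrt * hσ.sqrt)
            = hσ.sqrt * (hA1.sqrt * hA1.sqrt) * hσ.sqrt := by
              rw [conjTranspose_mul, hBh, hσh]
              noncomm_ring
          _ = hσ.sqrt * (1 - A) * hσ.sqrt := by rw [hBB]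
      rw [h5, trace_mul_cycle, hσ.sqrt_mul_self]
    have hSpsd : (hρ.sqrt * (1 - A) * hρ.sqrt).PosSemidef := by
      have h := hA1.conjTranspose_mul_mul_same hρ.sqrt
      rwa [hρh] at h
    have hStr : ((hρ.sqrt * (1 - A) * hρ.sqrt)).trace = (ρ * (1 - A)).trace := by
      rw [trace_mul_cycle, hρ.sqrt_mul_self]
    have hXX : ((((hA1.sqrt * hρ.sqrt * Kᴴ)ᴴ * (hA1.sqrt * hρ.sqrt * Kᴴ)).trace)).re
        ≤ ((ρ * (1 - A)).trace).re := by
      have h6 : (hA1.sqrt * hρ.sqrt * Kᴴ)ᴴ * (hA1.sqrt * hρ.sqrt * Kᴴ)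
          = K * (hρ.sqrt * (1 - A) * hρ.sqrt) * Kᴴ := by
        calc (hA1.sqrt * hρ.sqrt * Kᴴ)ᴴ * (hA1.sqrt * hρ.sqrt * Kᴴ)
            = K * (hρ.sqrt * (hA1.sqrt * hA1.sqrt) * hρ.sqrt) * Kᴴ := by
              rw [conjTranspose_mul, conjTranspose_mul, conjTranspose_conjTranspose, hBh, hρh]
              noncomm_ring
          _ = K * (hρ.sqrt * (1 - A) * hρ.sqrt) * Kᴴ := by rw [hBB]
      have h7 : ((hA1.sqrt * hρ.sqrt * Kᴴ)ᴴ * (hA1.sqrt * hρ.sqrt * Kᴴ)).trace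
          = ((hρ.sqrt * (1 - A) * hρ.sqrt) * (Kᴴ * K)).trace := by
        rw [h6, trace_mul_cycle, trace_mul_comm]
      have h8 : 0 ≤ ((hρ.sqrt * (1 - A) * hρ.sqrt) * (1 - Kᴴ * K)).trace :=
        psd_trace_mul_nonneg hSpsd hK
      rw [Matrix.mul_sub, mul_one, trace_sub] at h8
      have h9 := (Complex.nonneg_iff.mp h8).1
      rw [Complex.sub_re] at h9
      rw [h7]
      calc (((hρ.sqrt * (1 - A) * hρ.sqrt) * (Kᴴ * K)).trace).re
          ≤ ((hρ.sqrt * (1 - A) * hρ.sqrt).trace).re := by linarith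
        _ = ((ρ * (1 - A)).trace).re := by rw [hStr]
    rw [hXY]
    calc (((hA1.sqrt * hρ.sqrt * Kᴴ)ᴴ * (hA1.sqrt * hσ.sqrt)).trace).re
        ≤ ‖((hA1.sqrt * hρ.sqrt * Kᴴ)ᴴ * (hA1.sqrt * hσ.sqrt)).trace‖ := Complex.re_le_norm _
      _ ≤ Real.sqrt ((((hA1.sqrt * hρ.sqrt * Kᴴ)ᴴ * (hA1.sqrt * hρ.sqrt * Kᴴ)).trace).re)
            * Real.sqrt ((((hA1.sqrt * hσ.sqrt)ᴴ * (hA1.sqrt * hσ.sqrt)).trace).re) :=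
          CSmat _ _
      _ ≤ Real.sqrt (((ρ * (1 - A)).trace).re) * Real.sqrt (((σ * (1 - A)).trace).re) := by
          refine mul_le_mul (Real.sqrt_le_sqrt hXX) (le_of_eq (by rw [hYY]))
            (Real.sqrt_nonneg _) (Real.sqrt_nonneg _)
      _ = Real.sqrt (((σ * (1 - A)).trace).re) * Real.sqrt (((ρ * (1 - A)).trace).re) :=
          mul_comm _ _
  exact add_le_add hterm1 hterm2
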